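/- The weights rho(x) = E[R(0)|X=x] E[R(1)|X=x] / E[E[R(0)|X] E[R(1)|X]] are convex weights: rho(X) >= 0 almost surely and E[rho(X)] = 1. Consequently, under conditional independence of (Y(1),Y(0)) and (R(1),R(0)) given X, theta_drop = E[tau(X) rho(X)] is a convex weighted average of the conditional average treatment effects tau(x) = E[Y(1) - Y(0) | X = x]. -/

import Mathlib

open MeasureTheory ProbabilityTheory
open scoped NNReal ENNReal

section Aux

/-- Key set-integral identity from conditional independence of indicators. -/
lemma aux_setIntegral {Ω : Type*} (m mY : MeasurableSpace Ω) {mΩ : MeasurableSpace Ω}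
    {μ : Measure Ω} [IsProbabilityMeasure μ] (hm : m ≤ mΩ) (hmY : mY ≤ mΩ)
    {Y : Ω → ℝ} (hYm : StronglyMeasurable[mY] Y)
    {A : Set Ω} (hA : MeasurableSet A)
    (h : ∀ B : Set Ω, MeasurableSet[mY] B →
      (μ⟦B ∩ A | m⟧) =ᵐ[μ] fun ω => (μ⟦B | m⟧) ω * (μ⟦A | m⟧) ω)
    {s : Set Ω} (hs : MeasurableSet[m] s) :
    ∫ ω in s, (μ⟦A|m⟧) ω * Y ω ∂μ
      = ∫ ω in s, A.indicator (fun _ => (1:ℝ)) ω * Y ω ∂μ := by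
  haveI : SigmaFinite (μ.trim hm) := inferInstance
  set c : Ω → ℝ := μ⟦A|m⟧ with hc_def
  have hc_sm : StronglyMeasurable[m] c := stronglyMeasurable_condExp
  have hc_meas : Measurable c := (hc_sm.mono hm).measurable
  have hc_int : Integrable c μ := integrable_condExp
  have hc_nn : 0 ≤ᵐ[μ] c :=
    condExp_nonneg (Filter.Eventually.of_forall fun ω =>
      Set.indicator_nonneg (fun _ _ => zero_le_one) ω)
  -- the two measures
  set ν₁ : Measure Ω := μ.restrict (A ∩ s) with hν₁
  set ν₂ : Measure Ω := μ.withDensity (fun ω =>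
    ((s.indicator (fun ω' => Real.toNNReal (c ω')) ω : ℝ≥0) : ℝ≥0∞)) with hν₂
  have hf2_meas : Measurable fun ω => s.indicator (fun ω' => Real.toNNReal (c ω')) ω :=
    (hc_meas.real_toNNReal).indicator (hm s hs)
  -- key: the measures agree on mY-measurable sets
  have key : ∀ B : Set Ω, MeasurableSet[mY] B → ν₁ B = ν₂ B := by
    intro B hB
    have hBm : MeasurableSet B := hmY B hB
    have hBA_int : Integrable ((B ∩ A).indicator fun _ => (1:ℝ)) μ :=
      (integrable_const 1).indicator (hBm.inter hA)
    have hB_int : Integrable (B.indicator fun _ => (1:ℝ)) μ :=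
      (integrable_const 1).indicator hBm
    have hind_bd : ∀ᵐ ω ∂μ, ‖B.indicator (fun _ => (1:ℝ)) ω‖ ≤ 1 :=
      Filter.Eventually.of_forall fun ω => by
        by_cases hω : ω ∈ B <;> simp [Set.indicator_apply, hω]
    have hcB_int : Integrable (c * B.indicator fun _ => (1:ℝ)) μ := by
      refine (Integrable.bdd_mul (c := 1) hc_int
        ((stronglyMeasurable_const.indicator hBm).aestronglyMeasurable) hind_bd).congr ?_
      exact Filter.Eventually.of_forall fun ω => mul_comm _ _
    -- the real set-integral identity coming from conditional independence
    have keyR : ∫ ω in s, (B ∩ A).indicator (fun _ => (1:ℝ)) ω ∂μ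
        = ∫ ω in s, B.indicator (fun _ => (1:ℝ)) ω * c ω ∂μ := by
      have pullout : μ[c * B.indicator fun _ => (1:ℝ)|m]
          =ᵐ[μ] c * μ[B.indicator fun _ => (1:ℝ)|m] :=
        condExp_mul_of_stronglyMeasurable_left hc_sm hcB_int hB_int
      calc ∫ ω in s, (B ∩ A).indicator (fun _ => (1:ℝ)) ω ∂μ
          = ∫ ω in s, (μ⟦B ∩ A|m⟧) ω ∂μ := (setIntegral_condExp hm hBA_int hs).symm
        _ = ∫ ω in s, (μ⟦B|m⟧) ω * c ω ∂μ :=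
            integral_congr_ae (ae_restrict_of_ae (h B hB))
        _ = ∫ ω in s, (c * μ[B.indicator fun _ => (1:ℝ)|m]) ω ∂μ :=
            integral_congr_ae (ae_restrict_of_ae
              (Filter.Eventually.of_forall fun ω => mul_comm _ _))
        _ = ∫ ω in s, (μ[c * B.indicator fun _ => (1:ℝ)|m]) ω ∂μ :=
            (integral_congr_ae (ae_restrict_of_ae pullout)).symm
        _ = ∫ ω in s, (c * B.indicator fun _ => (1:ℝ)) ω ∂μ :=
            setIntegral_condExp hm hcB_int hs
        _ = ∫ ω in s, B.indicator (fun _ => (1:ℝ)) ω * c ω ∂μ :=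
            integral_congr_ae (ae_restrict_of_ae
              (Filter.Eventually.of_forall fun ω => mul_comm _ _))
    -- LHS of keyR is the measure of s ∩ (B ∩ A)
    have hLHS : ∫ ω in s, (B ∩ A).indicator (fun _ => (1:ℝ)) ω ∂μ
        = (μ (s ∩ (B ∩ A))).toReal := by
      rw [setIntegral_indicator (hBm.inter hA), setIntegral_const, smul_eq_mul, mul_one]
      rfl
    -- RHS of keyR is the integral of c over s ∩ B
    have hRHS : ∫ ω in s, B.indicator (fun _ => (1:ℝ)) ω * c ω ∂μ
        = ∫ ω in s ∩ B, c ω ∂μ := by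
      rw [← setIntegral_indicator hBm]
      refine integral_congr_ae (ae_restrict_of_ae (Filter.Eventually.of_forall fun ω => ?_))
      by_cases hω : ω ∈ B <;> simp [Set.indicator_apply, hω]
    -- compute ν₁ B and ν₂ B
    have hν₁B : ν₁ B = μ (s ∩ (B ∩ A)) := by
      rw [hν₁, Measure.restrict_apply hBm]
      congr 1
      ext ω; constructor
      · rintro ⟨h1, h2, h3⟩; exact ⟨h3, h1, h2⟩
      · rintro ⟨h1, h2, h3⟩; exact ⟨h2, h3, h1⟩
    have hν₂B : ν₂ B = ∫⁻ ω in s ∩ B, ENNReal.ofReal (c ω) ∂μ := by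
      rw [hν₂, withDensity_apply _ hBm]
      rw [show (fun ω => ((s.indicator (fun ω' => Real.toNNReal (c ω')) ω : ℝ≥0) : ℝ≥0∞))
          = fun ω => s.indicator (fun ω' => ENNReal.ofReal (c ω')) ω by
        ext ω; by_cases hω : ω ∈ s <;>
          simp [Set.indicator_apply, hω, ENNReal.ofReal]]
      rw [← Measure.restrict_restrict (hm s hs), lintegral_indicator (hm s hs)]
    rw [hν₁B, hν₂B, ← ofReal_integral_eq_lintegral_ofReal
      (hc_int.restrict) (ae_restrict_of_ae hc_nn), ← hRHS, ← keyR, hLHS,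
      ENNReal.ofReal_toReal (measure_ne_top μ _)]
  -- the trimmed measures agree
  have htrim : ν₁.trim hmY = ν₂.trim hmY := by
    refine @Measure.ext Ω mY _ _ fun B hB => ?_
    rw [trim_measurableSet_eq hmY hB, trim_measurableSet_eq hmY hB]
    exact key B hB
  -- conclude via integral_trim
  calc ∫ ω in s, c ω * Y ω ∂μ
      = ∫ ω, s.indicator (fun ω' => c ω' * Y ω') ω ∂μ := (integral_indicator (hm s hs)).symm
    _ = ∫ ω, s.indicator (fun ω' => Real.toNNReal (c ω')) ω • Y ω ∂μ := by
        refine integral_congr_ae ?_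
        filter_upwards [hc_nn] with ω hω
        by_cases hωs : ω ∈ s
        · simp [Set.indicator_of_mem hωs, NNReal.smul_def, Real.coe_toNNReal _ hω]
        · simp [Set.indicator_of_notMem hωs]
    _ = ∫ ω, Y ω ∂ν₂ := (integral_withDensity_eq_integral_smul hf2_meas Y).symm
    _ = ∫ ω, Y ω ∂(ν₂.trim hmY) := integral_trim hmY hYm
    _ = ∫ ω, Y ω ∂(ν₁.trim hmY) := by rw [htrim]
    _ = ∫ ω, Y ω ∂ν₁ := (integral_trim hmY hYm).symm
    _ = ∫ ω in s ∩ A, Y ω ∂μ := by rw [hν₁, Set.inter_comm]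
    _ = ∫ ω in s, A.indicator Y ω ∂μ := (setIntegral_indicator hA).symm
    _ = ∫ ω in s, A.indicator (fun _ => (1:ℝ)) ω * Y ω ∂μ := by
        refine integral_congr_ae (ae_restrict_of_ae (Filter.Eventually.of_forall fun ω => ?_))
        by_cases hω : ω ∈ A <;> simp [Set.indicator_apply, hω]

end Aux

/-- Product rule for conditional expectation under conditional independence
(indicator version). -/
lemma condexp_mul_indicator_of_indep {Ω : Type*} (m mY : MeasurableSpace Ω)
    {mΩ : MeasurableSpace Ω}
    {μ : Measure Ω} [IsProbabilityMeasure μ] (hm : m ≤ mΩ) (hmY : mY ≤ mΩ)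
    {Y : Ω → ℝ} (hYm : StronglyMeasurable[mY] Y) (hYint : Integrable Y μ)
    {A : Set Ω} (hA : MeasurableSet A)
    (h : ∀ B : Set Ω, MeasurableSet[mY] B →
      (μ⟦B ∩ A | m⟧) =ᵐ[μ] fun ω => (μ⟦B | m⟧) ω * (μ⟦A | m⟧) ω) :
    μ[fun ω => Y ω * A.indicator (fun _ => (1:ℝ)) ω|m]
      =ᵐ[μ] fun ω => (μ[Y|m]) ω * (μ⟦A|m⟧) ω := by
  haveI : SigmaFinite (μ.trim hm) := inferInstance
  set c : Ω → ℝ := μ⟦A|m⟧ with hc_def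
  have hc_sm : StronglyMeasurable[m] c := stronglyMeasurable_condExp
  have hc_int : Integrable c μ := integrable_condExp
  have hc_nn : 0 ≤ᵐ[μ] c :=
    condExp_nonneg (Filter.Eventually.of_forall fun ω =>
      Set.indicator_nonneg (fun _ _ => zero_le_one) ω)
  have hc_le1 : c ≤ᵐ[μ] fun _ => (1:ℝ) := by
    have h1 : μ[(fun _ => (1:ℝ))|m] = fun _ => (1:ℝ) := condExp_const hm 1
    have := condExp_mono (m := m) (μ := μ) ((integrable_const (1:ℝ)).indicator hA)
      (integrable_const (1:ℝ))
      (Filter.Eventually.of_forall fun ω =>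
        Set.indicator_apply_le' (fun _ => le_rfl) (fun _ => zero_le_one))
    rwa [h1] at this
  have hc_bd : ∀ᵐ ω ∂μ, ‖c ω‖ ≤ 1 := by
    filter_upwards [hc_nn, hc_le1] with ω h1 h2
    simp only [Pi.zero_apply] at h1
    rw [Real.norm_eq_abs, abs_le]
    exact ⟨by linarith, h2⟩
  have hf : Integrable (fun ω => Y ω * A.indicator (fun _ => (1:ℝ)) ω) μ := by
    refine (hYint.indicator hA).congr
      (Filter.Eventually.of_forall fun ω => ?_)
    by_cases hω : ω ∈ A <;> simp [Set.indicator_apply, hω]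
  have hcY_int : Integrable (c * Y) μ :=
    Integrable.bdd_mul (c := 1) hYint hc_int.aestronglyMeasurable hc_bd
  have pullout : μ[c * Y|m] =ᵐ[μ] c * μ[Y|m] :=
    condExp_mul_of_stronglyMeasurable_left hc_sm hcY_int hYint
  have hg_int : Integrable (fun ω => (μ[Y|m]) ω * c ω) μ :=
    (Integrable.bdd_mul (c := 1) integrable_condExp hc_int.aestronglyMeasurable hc_bd).congr
      (Filter.Eventually.of_forall fun ω => mul_comm _ _)
  refine (ae_eq_condExp_of_forall_setIntegral_eq hm hf
    (fun s _ _ => hg_int.integrableOn) (fun s hs _ => ?_)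
    ((stronglyMeasurable_condExp.mul stronglyMeasurable_condExp : StronglyMeasurable[m] _).aestronglyMeasurable)).symm
  calc ∫ ω in s, (μ[Y|m]) ω * c ω ∂μ
      = ∫ ω in s, (c * μ[Y|m]) ω ∂μ :=
        integral_congr_ae (ae_restrict_of_ae
          (Filter.Eventually.of_forall fun ω => mul_comm _ _))
    _ = ∫ ω in s, (μ[c * Y|m]) ω ∂μ :=
        (integral_congr_ae (ae_restrict_of_ae pullout)).symm
    _ = ∫ ω in s, (c * Y) ω ∂μ := setIntegral_condExp hm hcY_int hs
    _ = ∫ ω in s, A.indicator (fun _ => (1:ℝ)) ω * Y ω ∂μ :=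
        aux_setIntegral m mY hm hmY hYm hA h hs
    _ = ∫ ω in s, Y ω * A.indicator (fun _ => (1:ℝ)) ω ∂μ :=
        integral_congr_ae (ae_restrict_of_ae
          (Filter.Eventually.of_forall fun ω => mul_comm _ _))
/-- The weights `ρ(x) = E[R(0)|X=x] E[R(1)|X=x] / E[E[R(0)|X] E[R(1)|X]]` are convex weights:
`ρ(X) ≥ 0` a.s. and `E[ρ(X)] = 1`. Consequently, under conditional independence of
`(Y(1), Y(0))` and `(R(1), R(0))` given `X`,
`θ_drop = E[τ(X) ρ(X)]` is a convex weighted average of the conditional average treatment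
effects `τ(x) = E[Y(1) - Y(0) | X = x]`. -/
theorem rho_convex_weights
    {Ω : Type*} [MeasurableSpace Ω] [StandardBorelSpace Ω] [Nonempty Ω]
    (μ : Measure Ω) [IsProbabilityMeasure μ]
    {k : ℕ} (Y : Fin 2 → Ω → ℝ) (R : Fin 2 → Ω → ℝ) (X : Ω → Fin k → ℝ)
    (hYmeas : ∀ d, Measurable (Y d)) (hRmeas : ∀ d, Measurable (R d))
    (hXmeas : Measurable X)
    (hR01 : ∀ d ω, R d ω = 0 ∨ R d ω = 1)
    (hYint : ∀ d, Integrable (Y d) μ)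
    (hRpos : ∀ d, 0 < ∫ ω, R d ω ∂μ)
    (hle : MeasurableSpace.comap X inferInstance ≤ ‹MeasurableSpace Ω›)
    (r : Fin 2 → (Fin k → ℝ) → ℝ) (yr : Fin 2 → (Fin k → ℝ) → ℝ)
    (τ : (Fin k → ℝ) → ℝ) (ρ : (Fin k → ℝ) → ℝ)
    (hr : ∀ d, μ[R d | MeasurableSpace.comap X inferInstance]
      =ᵐ[μ] fun ω => r d (X ω))
    (hyr : ∀ d, μ[fun ω => Y d ω * R d ω | MeasurableSpace.comap X inferInstance]
      =ᵐ[μ] fun ω => yr d (X ω))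
    (hτ : μ[fun ω => Y 1 ω - Y 0 ω | MeasurableSpace.comap X inferInstance]
      =ᵐ[μ] fun ω => τ (X ω))
    (hdenpos : 0 < ∫ ω, r 1 (X ω) * r 0 (X ω) ∂μ)
    (hρ : ∀ x, ρ x = r 0 x * r 1 x / ∫ ω, r 0 (X ω) * r 1 (X ω) ∂μ) :
    (∀ᵐ ω ∂μ, 0 ≤ ρ (X ω)) ∧ (∫ ω, ρ (X ω) ∂μ = 1) ∧
      (CondIndepFun (MeasurableSpace.comap X inferInstance) hle
          (fun ω => (Y 1 ω, Y 0 ω)) (fun ω => (R 1 ω, R 0 ω)) μ →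
        ((∫ ω, yr 1 (X ω) * r 0 (X ω) ∂μ) - ∫ ω, yr 0 (X ω) * r 1 (X ω) ∂μ)
            / (∫ ω, r 1 (X ω) * r 0 (X ω) ∂μ)
          = ∫ ω, τ (X ω) * ρ (X ω) ∂μ) := by
  have hm : MeasurableSpace.comap X inferInstance ≤ ‹MeasurableSpace Ω› := hle
  -- basic facts about R
  have hRbd : ∀ d, ∀ᵐ ω ∂μ, ‖R d ω‖ ≤ 1 := fun d =>
    Filter.Eventually.of_forall fun ω => by rcases hR01 d ω with h | h <;> simp [h]
  have hRint : ∀ d, Integrable (R d) μ := fun d =>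
    Integrable.mono' (integrable_const (1:ℝ)) (hRmeas d).aestronglyMeasurable (hRbd d)
  have hr_nn : ∀ d, ∀ᵐ ω ∂μ, 0 ≤ r d (X ω) := by
    intro d
    have h0 : 0 ≤ᵐ[μ] μ[R d|(MeasurableSpace.comap X inferInstance)] :=
      condExp_nonneg (Filter.Eventually.of_forall fun ω => by
        rcases hR01 d ω with h | h <;> simp [h])
    filter_upwards [h0, hr d] with ω h1 h2
    rw [← h2]
    simpa using h1
  have hr_le1 : ∀ d, ∀ᵐ ω ∂μ, r d (X ω) ≤ 1 := by
    intro d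
    have h1 : μ[(fun _ => (1:ℝ))|(MeasurableSpace.comap X inferInstance)] = fun _ => (1:ℝ) := condExp_const hm 1
    have h2 := condExp_mono (m := MeasurableSpace.comap X inferInstance) (μ := μ) (hRint d) (integrable_const (1:ℝ))
      (Filter.Eventually.of_forall fun ω => by rcases hR01 d ω with h | h <;> simp [h])
    rw [h1] at h2
    filter_upwards [h2, hr d] with ω h3 h4
    rw [← h4]
    exact h3
  -- denominator facts
  have hDcomm : (∫ ω, r 0 (X ω) * r 1 (X ω) ∂μ) = ∫ ω, r 1 (X ω) * r 0 (X ω) ∂μ :=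
    integral_congr_ae (Filter.Eventually.of_forall fun ω => mul_comm _ _)
  have hDpos : 0 < ∫ ω, r 0 (X ω) * r 1 (X ω) ∂μ := by rw [hDcomm]; exact hdenpos
  have hDne : (∫ ω, r 0 (X ω) * r 1 (X ω) ∂μ) ≠ 0 := ne_of_gt hDpos
  refine ⟨?_, ?_, ?_⟩
  · -- nonnegativity
    filter_upwards [hr_nn 0, hr_nn 1] with ω h0 h1
    rw [hρ]
    exact div_nonneg (mul_nonneg h0 h1) (le_of_lt hDpos)
  · -- integral one
    simp_rw [hρ]
    rw [integral_div, div_self hDne]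
  · -- the weighted average representation
    intro hCI
    have hmY : MeasurableSpace.comap (fun ω => (Y 1 ω, Y 0 ω)) inferInstance
        ≤ ‹MeasurableSpace Ω› :=
      Measurable.comap_le ((hYmeas 1).prodMk (hYmeas 0))
    have hpairY : Measurable[(MeasurableSpace.comap (fun ω => (Y 1 ω, Y 0 ω)) inferInstance)] (fun ω => (Y 1 ω, Y 0 ω)) :=
      measurable_iff_comap_le.mpr le_rfl
    have hY1m : StronglyMeasurable[(MeasurableSpace.comap (fun ω => (Y 1 ω, Y 0 ω)) inferInstance)] (Y 1) :=
      (measurable_fst.comp hpairY).stronglyMeasurable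
    have hY0m : StronglyMeasurable[(MeasurableSpace.comap (fun ω => (Y 1 ω, Y 0 ω)) inferInstance)] (Y 0) :=
      (measurable_snd.comp hpairY).stronglyMeasurable
    rw [condIndepFun_iff_condExp_inter_preimage_eq_mul
      ((hYmeas 1).prodMk (hYmeas 0)) ((hRmeas 1).prodMk (hRmeas 0))] at hCI
    -- the events A d = {R d = 1}
    have hprod : ∀ d : Fin 2, StronglyMeasurable[(MeasurableSpace.comap (fun ω => (Y 1 ω, Y 0 ω)) inferInstance)] (Y d) →
        (∀ B : Set Ω, MeasurableSet[(MeasurableSpace.comap (fun ω => (Y 1 ω, Y 0 ω)) inferInstance)] B →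
          (μ⟦B ∩ (R d ⁻¹' {1}) | (MeasurableSpace.comap X inferInstance)⟧) =ᵐ[μ]
            fun ω => (μ⟦B | (MeasurableSpace.comap X inferInstance)⟧) ω * (μ⟦R d ⁻¹' {1} | (MeasurableSpace.comap X inferInstance)⟧) ω) →
        μ[fun ω => Y d ω * R d ω|(MeasurableSpace.comap X inferInstance)] =ᵐ[μ]
          fun ω => (μ[Y d|(MeasurableSpace.comap X inferInstance)]) ω * (μ[R d|(MeasurableSpace.comap X inferInstance)]) ω := by
      intro d hYdm hcond
      have hA : MeasurableSet (R d ⁻¹' {1}) := (hRmeas d) (measurableSet_singleton 1)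
      have hind : R d = (R d ⁻¹' {1}).indicator (fun _ => (1:ℝ)) := by
        funext ω
        rcases hR01 d ω with h | h
        · have : ω ∉ R d ⁻¹' {1} := by simp [Set.mem_preimage, h]
          simp [Set.indicator_of_notMem this, h]
        · have : ω ∈ R d ⁻¹' {1} := by simp [Set.mem_preimage, h]
          simp [Set.indicator_of_mem this, h]
      have := condexp_mul_indicator_of_indep (MeasurableSpace.comap X inferInstance) (MeasurableSpace.comap (fun ω => (Y 1 ω, Y 0 ω)) inferInstance) hm hmY hYdm (hYint d) hA hcond
      calc μ[fun ω => Y d ω * R d ω|(MeasurableSpace.comap X inferInstance)]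
          = μ[fun ω => Y d ω * (R d ⁻¹' {1}).indicator (fun _ => (1:ℝ)) ω|(MeasurableSpace.comap X inferInstance)] := by
            rw [← hind]
        _ =ᵐ[μ] fun ω => (μ[Y d|(MeasurableSpace.comap X inferInstance)]) ω * (μ⟦R d ⁻¹' {1}|(MeasurableSpace.comap X inferInstance)⟧) ω := this
        _ = fun ω => (μ[Y d|(MeasurableSpace.comap X inferInstance)]) ω * (μ[R d|(MeasurableSpace.comap X inferInstance)]) ω := by rw [← hind]
    have hcond1 : ∀ B : Set Ω, MeasurableSet[(MeasurableSpace.comap (fun ω => (Y 1 ω, Y 0 ω)) inferInstance)] B →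
        (μ⟦B ∩ (R 1 ⁻¹' {1}) | (MeasurableSpace.comap X inferInstance)⟧) =ᵐ[μ]
          fun ω => (μ⟦B | (MeasurableSpace.comap X inferInstance)⟧) ω * (μ⟦R 1 ⁻¹' {1} | (MeasurableSpace.comap X inferInstance)⟧) ω := by
      rintro B ⟨u, hu, rfl⟩
      exact hCI u (Prod.fst ⁻¹' {1}) hu (measurable_fst (measurableSet_singleton 1))
    have hcond0 : ∀ B : Set Ω, MeasurableSet[(MeasurableSpace.comap (fun ω => (Y 1 ω, Y 0 ω)) inferInstance)] B →
        (μ⟦B ∩ (R 0 ⁻¹' {1}) | (MeasurableSpace.comap X inferInstance)⟧) =ᵐ[μ]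
          fun ω => (μ⟦B | (MeasurableSpace.comap X inferInstance)⟧) ω * (μ⟦R 0 ⁻¹' {1} | (MeasurableSpace.comap X inferInstance)⟧) ω := by
      rintro B ⟨u, hu, rfl⟩
      exact hCI u (Prod.snd ⁻¹' {1}) hu (measurable_snd (measurableSet_singleton 1))
    have hprod1 := hprod 1 hY1m hcond1
    have hprod0 := hprod 0 hY0m hcond0
    -- now express yr d (X ·)
    have hyrd : ∀ d : Fin 2, (μ[fun ω => Y d ω * R d ω|(MeasurableSpace.comap X inferInstance)] =ᵐ[μ]
          fun ω => (μ[Y d|(MeasurableSpace.comap X inferInstance)]) ω * (μ[R d|(MeasurableSpace.comap X inferInstance)]) ω) →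
        (fun ω => yr d (X ω)) =ᵐ[μ] fun ω => (μ[Y d|(MeasurableSpace.comap X inferInstance)]) ω * r d (X ω) := by
      intro d hp
      filter_upwards [hyr d, hp, hr d] with ω h1 h2 h3
      rw [← h1, h2, h3]
    have hyrd1 := hyrd 1 hprod1
    have hyrd0 := hyrd 0 hprod0
    -- τ as difference of conditional expectations
    have hτ' : (fun ω => τ (X ω)) =ᵐ[μ] fun ω => (μ[Y 1|(MeasurableSpace.comap X inferInstance)]) ω - (μ[Y 0|(MeasurableSpace.comap X inferInstance)]) ω := by
      have hsub : μ[fun ω => Y 1 ω - Y 0 ω|(MeasurableSpace.comap X inferInstance)] =ᵐ[μ] μ[Y 1|(MeasurableSpace.comap X inferInstance)] - μ[Y 0|(MeasurableSpace.comap X inferInstance)] :=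
        condExp_sub (hYint 1) (hYint 0) _
      filter_upwards [hτ, hsub] with ω h1 h2
      rw [← h1, h2]
      rfl
    -- integrability
    have haesm : ∀ d : Fin 2, AEStronglyMeasurable (fun ω => r d (X ω)) μ := fun d =>
      (stronglyMeasurable_condExp.mono hm).aestronglyMeasurable.congr (hr d)
    have hrr_bd : ∀ᵐ ω ∂μ, ‖r 1 (X ω) * r 0 (X ω)‖ ≤ 1 := by
      filter_upwards [hr_nn 0, hr_nn 1, hr_le1 0, hr_le1 1] with ω h0 h1 h2 h3
      rw [Real.norm_eq_abs, abs_mul, abs_of_nonneg h1, abs_of_nonneg h0]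
      calc r 1 (X ω) * r 0 (X ω) ≤ 1 * 1 := by
            exact mul_le_mul h3 h2 h0 zero_le_one
        _ = 1 := by ring
    have hg_int : ∀ d : Fin 2,
        Integrable (fun ω => (μ[Y d|(MeasurableSpace.comap X inferInstance)]) ω * (r 1 (X ω) * r 0 (X ω))) μ := fun d =>
      (Integrable.bdd_mul (c := 1) integrable_condExp ((haesm 1).mul (haesm 0))
        hrr_bd).congr (Filter.Eventually.of_forall fun ω => mul_comm _ _)
    -- the numerator
    have hI1 : ∫ ω, yr 1 (X ω) * r 0 (X ω) ∂μ
        = ∫ ω, (μ[Y 1|(MeasurableSpace.comap X inferInstance)]) ω * (r 1 (X ω) * r 0 (X ω)) ∂μ := by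
      refine integral_congr_ae ?_
      filter_upwards [hyrd1] with ω h
      rw [h]; ring
    have hI0 : ∫ ω, yr 0 (X ω) * r 1 (X ω) ∂μ
        = ∫ ω, (μ[Y 0|(MeasurableSpace.comap X inferInstance)]) ω * (r 1 (X ω) * r 0 (X ω)) ∂μ := by
      refine integral_congr_ae ?_
      filter_upwards [hyrd0] with ω h
      rw [h]; ring
    have hN : (∫ ω, yr 1 (X ω) * r 0 (X ω) ∂μ) - ∫ ω, yr 0 (X ω) * r 1 (X ω) ∂μ
        = ∫ ω, τ (X ω) * (r 1 (X ω) * r 0 (X ω)) ∂μ := by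
      rw [hI1, hI0, ← integral_sub (hg_int 1) (hg_int 0)]
      refine integral_congr_ae ?_
      filter_upwards [hτ'] with ω h
      rw [h]; ring
    -- the RHS
    have hRHS : ∫ ω, τ (X ω) * ρ (X ω) ∂μ
        = (∫ ω, τ (X ω) * (r 1 (X ω) * r 0 (X ω)) ∂μ)
            / ∫ ω, r 1 (X ω) * r 0 (X ω) ∂μ := by
      rw [← hDcomm]
      calc ∫ ω, τ (X ω) * ρ (X ω) ∂μ
          = ∫ ω, (τ (X ω) * (r 1 (X ω) * r 0 (X ω)))
              / (∫ ω', r 0 (X ω') * r 1 (X ω') ∂μ) ∂μ := by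
            refine integral_congr_ae (Filter.Eventually.of_forall fun ω => ?_)
            simp only [hρ]; ring
        _ = (∫ ω, τ (X ω) * (r 1 (X ω) * r 0 (X ω)) ∂μ)
              / ∫ ω, r 0 (X ω) * r 1 (X ω) ∂μ := integral_div _ _
    rw [hRHS, hN]
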